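/- Price's theorem in one dimension: if f : ℝ → ℝ is twice continuously differentiable with f, f', f'' of at most polynomial growth, and θ ∼ N(μ, σ²), then ∂/∂σ E[f(θ)] = E[ f'(θ) · (θ − μ)/σ ]. -/

import Mathlib

open Real MeasureTheory ProbabilityTheory

lemma aux_poly_bound (k : ℕ) (x : ℝ) : (1 + |x|) ^ k ≤ 2 ^ k * (1 + |x| ^ k) := by
  have h1 : (1 + |x|) ^ k ≤ (2 * max 1 |x|) ^ k := by
    apply pow_le_pow_left₀ (by positivity)
    have := le_max_left (1:ℝ) |x|; have := le_max_right (1:ℝ) |x|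
    linarith
  have h2 : (max 1 |x|) ^ k ≤ 1 + |x| ^ k := by
    rcases max_cases (1:ℝ) |x| with ⟨h, _⟩ | ⟨h, _⟩ <;> rw [h]
    · rw [one_pow]; nlinarith [pow_nonneg (abs_nonneg x) k]
    · nlinarith [pow_nonneg (abs_nonneg x) k]
  calc (1 + |x|) ^ k ≤ (2 * max 1 |x|) ^ k := h1
    _ = 2 ^ k * (max 1 |x|) ^ k := mul_pow 2 _ k
    _ ≤ 2 ^ k * (1 + |x| ^ k) := by
        apply mul_le_mul_of_nonneg_left h2 (by positivity)

lemma aux_integrable {g : ℝ → ℝ} (hg : Continuous g) {C : ℝ} {k : ℕ}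
    (hb : ∀ x, |g x| ≤ C * (1 + |x|) ^ k) :
    Integrable g (gaussianReal 0 1) := by
  have hC : 0 ≤ C := by have := hb 0; simp at this; exact (abs_nonneg _).trans this
  have hv : (1 : NNReal) ≠ 0 := one_ne_zero
  rw [gaussianReal_of_var_ne_zero _ hv,
    integrable_withDensity_iff (measurable_gaussianPDF 0 1)
      (Filter.Eventually.of_forall fun x => ENNReal.ofReal_lt_top)]
  have hpdf : ∀ x : ℝ, (gaussianPDF 0 1 x).toReal = (√(2 * π))⁻¹ * rexp (-(2⁻¹ : ℝ) * x ^ 2) := by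
    intro x
    rw [gaussianPDF_def]
    rw [ENNReal.toReal_ofReal (gaussianPDFReal_nonneg _ _ _)]
    simp only [gaussianPDFReal, NNReal.coe_one, mul_one, sub_zero]
    rw [show -x ^ 2 / 2 = -(2⁻¹:ℝ) * x ^ 2 by ring]
  have hint1 : Integrable (fun x : ℝ => rexp (-(2⁻¹:ℝ) * x ^ 2)) := by
    simpa using integrable_exp_neg_mul_sq (by norm_num : (0:ℝ) < 2⁻¹)
  have hint2 : Integrable (fun x : ℝ => |x| ^ k * rexp (-(2⁻¹:ℝ) * x ^ 2)) := by
    have h2k : Integrable (fun x : ℝ => x ^ (2 * k) * rexp (-(2⁻¹:ℝ) * x ^ 2)) := by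
      have := integrable_rpow_mul_exp_neg_mul_sq (by norm_num : (0:ℝ) < 2⁻¹)
        (s := ((2 * k : ℕ) : ℝ)) (lt_of_lt_of_le (by norm_num) (Nat.cast_nonneg _))
      simp only [Real.rpow_natCast] at this; exact this
    refine (hint1.add h2k).mono' ?_ (Filter.Eventually.of_forall fun x => ?_)
    · exact ((continuous_abs.pow k).mul (by continuity)).aestronglyMeasurable
    · have hx : |x| ^ k ≤ 1 + x ^ (2 * k) := by
        have hsq : x ^ (2 * k) = |x| ^ (2 * k) := by
          rw [pow_mul, pow_mul, sq_abs]
        rw [hsq]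
        rcases le_total (|x|) 1 with h | h
        · have := pow_le_one₀ (abs_nonneg x) h (n := k)
          nlinarith [pow_nonneg (abs_nonneg x) (2 * k)]
        · have hk2 : k ≤ 2 * k := by omega
          have := pow_le_pow_right₀ h hk2
          nlinarith
      have hexp := Real.exp_pos (-(2⁻¹:ℝ) * x ^ 2)
      rw [Real.norm_eq_abs, abs_mul, abs_of_pos hexp,
        abs_of_nonneg (by positivity : (0:ℝ) ≤ |x| ^ k)]
      simp only [Pi.add_apply]
      nlinarith
  have hD : Integrable (fun x : ℝ =>
      C * 2 ^ k * (√(2 * π))⁻¹ * (rexp (-(2⁻¹:ℝ) * x ^ 2) + |x| ^ k * rexp (-(2⁻¹:ℝ) * x ^ 2))) :=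
    (hint1.add hint2).const_mul _
  refine hD.mono' ?_ (Filter.Eventually.of_forall fun x => ?_)
  · exact (hg.aestronglyMeasurable).mul
      ((measurable_gaussianPDF 0 1).ennreal_toReal.aestronglyMeasurable)
  · rw [norm_mul, hpdf x]
    have h1 : ‖g x‖ ≤ C * (1 + |x|) ^ k := hb x
    have h2 : (1 + |x|) ^ k ≤ 2 ^ k * (1 + |x| ^ k) := aux_poly_bound k x
    have hexp : 0 < rexp (-(2⁻¹:ℝ) * x ^ 2) := Real.exp_pos _
    have hs : 0 < (√(2 * π))⁻¹ := by positivity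
    have hnorm : ‖(√(2 * π))⁻¹ * rexp (-(2⁻¹:ℝ) * x ^ 2)‖
        = (√(2 * π))⁻¹ * rexp (-(2⁻¹:ℝ) * x ^ 2) := by
      rw [Real.norm_eq_abs, abs_of_pos (by positivity)]
    rw [hnorm]
    have hxk : (0:ℝ) ≤ |x| ^ k := by positivity
    nlinarith [mul_le_mul_of_nonneg_right h1 (le_of_lt (mul_pos hs hexp)),
      mul_le_mul_of_nonneg_right h2 (mul_nonneg (mul_nonneg hC hs.le) hexp.le)]

lemma aux_map (μ : ℝ) {s : ℝ} (hs : 0 < s) :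
    Measure.map (fun y => s * y + μ) (gaussianReal 0 1) = gaussianReal μ (s ^ 2).toNNReal := by
  have h1 : Measure.map (fun y => s * y) (gaussianReal 0 1)
      = gaussianReal 0 (s ^ 2).toNNReal := by
    have h := gaussianReal_map_const_mul (μ := 0) (v := 1) s
    have hnn : (⟨s ^ 2, sq_nonneg s⟩ : NNReal) * 1 = (s ^ 2).toNNReal := by
      ext
      simp [Real.coe_toNNReal _ (sq_nonneg s)]
    rw [mul_zero] at h
    rw [← hnn]
    exact h
  have h2 : (fun y : ℝ => s * y + μ) = (· + μ) ∘ (fun y : ℝ => s * y) := rfl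
  rw [h2, ← Measure.map_map (measurable_add_const μ) (measurable_const_mul s), h1,
    gaussianReal_map_add_const μ, zero_add]

lemma aux_cov {g : ℝ → ℝ} (hg : Continuous g) (μ : ℝ) {s : ℝ} (hs : 0 < s) :
    ∫ x, g x ∂(gaussianReal μ (s ^ 2).toNNReal)
      = ∫ y, g (s * y + μ) ∂(gaussianReal 0 1) := by
  rw [← aux_map μ hs, integral_map (by fun_prop) hg.aestronglyMeasurable]

lemma aux_est {A : ℝ} (k : ℕ) {x y : ℝ} (h : 1 + |x| ≤ A * (1 + |y|)) :
    (1 + |x|) ^ k ≤ A ^ k * (1 + |y|) ^ k := by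
  calc (1 + |x|) ^ k ≤ (A * (1 + |y|)) ^ k := pow_le_pow_left₀ (by positivity) h k
    _ = A ^ k * (1 + |y|) ^ k := mul_pow _ _ _

/-- Price's theorem in one dimension: if `f` is twice
continuously differentiable with `f`, `f'`, `f''` of at most polynomial
growth, and `θ ∼ N(μ, σ²)`, then
`∂/∂σ E[f(θ)] = E[f'(θ)·(θ-μ)/σ]`. -/
theorem stmt18 (f : ℝ → ℝ) (hf : ContDiff ℝ 2 f)
    (hf_growth : ∃ C k, ∀ x : ℝ, |f x| ≤ C * (1 + |x|) ^ k)
    (hf'_growth : ∃ C k, ∀ x : ℝ, |deriv f x| ≤ C * (1 + |x|) ^ k)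
    (hf''_growth : ∃ C k, ∀ x : ℝ, |deriv (deriv f) x| ≤ C * (1 + |x|) ^ k)
    (μ σ : ℝ) (hσ : 0 < σ) :
    HasDerivAt (fun s : ℝ => ∫ x, f x ∂(gaussianReal μ (s ^ 2).toNNReal))
      (∫ x, deriv f x * (x - μ) / σ ∂(gaussianReal μ (σ ^ 2).toNNReal)) σ := by
  obtain ⟨C, k, hC⟩ := hf_growth
  obtain ⟨C', k', hC'⟩ := hf'_growth
  have hfc : Continuous f := hf.continuous
  have hf'c : Continuous (deriv f) := hf.continuous_deriv one_le_two
  have hdiff : Differentiable ℝ f := hf.differentiable two_ne_zero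
  have hC0 : 0 ≤ C := by
    have := hC 0; simp at this; exact (abs_nonneg _).trans this
  have hC'0 : 0 ≤ C' := by
    have := hC' 0; simp at this; exact (abs_nonneg _).trans this
  set γ := gaussianReal 0 1 with hγ
  -- the differentiation under the integral sign
  have key := hasDerivAt_integral_of_dominated_loc_of_deriv_le (μ := γ)
      (F := fun s y => f (s * y + μ)) (F' := fun s y => deriv f (s * y + μ) * y)
      (x₀ := σ) (bound := fun y => C' * (1 + |μ| + 2 * σ) ^ k' * (1 + |y|) ^ (k' + 1))
      (Metric.ball_mem_nhds σ (half_pos hσ))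
      (Filter.Eventually.of_forall fun s =>
        (hfc.comp (by continuity)).aestronglyMeasurable)
      ?_ ((hf'c.comp (by continuity)).mul continuous_id).aestronglyMeasurable
      ?_ ?_ ?_
  · -- assemble the conclusion
    have heq : (fun s : ℝ => ∫ x, f x ∂(gaussianReal μ (s ^ 2).toNNReal))
        =ᶠ[nhds σ] (fun s => ∫ y, f (s * y + μ) ∂γ) := by
      filter_upwards [isOpen_Ioi.mem_nhds hσ] with s hs
      exact aux_cov hfc μ hs
    have hval : (∫ x, deriv f x * (x - μ) / σ ∂(gaussianReal μ (σ ^ 2).toNNReal))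
        = ∫ y, deriv f (σ * y + μ) * y ∂γ := by
      rw [aux_cov (g := fun x => deriv f x * (x - μ) / σ)
        ((hf'c.mul (by continuity)).div_const σ) μ hσ]
      refine integral_congr_ae (Filter.Eventually.of_forall fun y => ?_)
      show deriv f (σ * y + μ) * (σ * y + μ - μ) / σ = deriv f (σ * y + μ) * y
      field_simp
      ring
    rw [hval]
    exact key.2.congr_of_eventuallyEq heq
  · -- integrability of F σ
    refine aux_integrable (hfc.comp (by continuity)) (C := C * (1 + |μ| + σ) ^ k) (k := k)
      fun y => ?_
    have hineq : 1 + |σ * y + μ| ≤ (1 + |μ| + σ) * (1 + |y|) := by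
      have h1 := abs_add_le (σ * y) μ
      have h2 : |σ * y| = σ * |y| := by rw [abs_mul, abs_of_pos hσ]
      nlinarith [abs_nonneg y, abs_nonneg μ]
    calc |f (σ * y + μ)| ≤ C * (1 + |σ * y + μ|) ^ k := hC _
      _ ≤ C * ((1 + |μ| + σ) ^ k * (1 + |y|) ^ k) :=
          mul_le_mul_of_nonneg_left (aux_est k hineq) hC0
      _ = C * (1 + |μ| + σ) ^ k * (1 + |y|) ^ k := by ring
  · -- the uniform bound
    refine Filter.Eventually.of_forall fun y => fun s hs => ?_
    have hs' : |s| ≤ 2 * σ := by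
      rw [Metric.mem_ball, Real.dist_eq] at hs
      have := abs_lt.mp hs
      rw [abs_le]; constructor <;> linarith [this.1, this.2]
    have hineq : 1 + |s * y + μ| ≤ (1 + |μ| + 2 * σ) * (1 + |y|) := by
      have h1 := abs_add_le (s * y) μ
      have h2 : |s * y| = |s| * |y| := abs_mul s y
      nlinarith [abs_nonneg y, abs_nonneg μ, abs_nonneg s,
        mul_le_mul_of_nonneg_right hs' (abs_nonneg y)]
    have hb1 : |deriv f (s * y + μ)| ≤ C' * ((1 + |μ| + 2 * σ) ^ k' * (1 + |y|) ^ k') :=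
      (hC' _).trans (mul_le_mul_of_nonneg_left (aux_est k' hineq) hC'0)
    have hy : |y| ≤ 1 + |y| := by linarith [abs_nonneg y]
    calc ‖deriv f (s * y + μ) * y‖ = |deriv f (s * y + μ)| * |y| := abs_mul _ _
      _ ≤ C' * ((1 + |μ| + 2 * σ) ^ k' * (1 + |y|) ^ k') * (1 + |y|) := by
          apply mul_le_mul hb1 hy (abs_nonneg y)
          positivity
      _ = C' * (1 + |μ| + 2 * σ) ^ k' * (1 + |y|) ^ (k' + 1) := by ring
  · -- integrability of the bound
    refine aux_integrable (by continuity)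
      (C := C' * (1 + |μ| + 2 * σ) ^ k') (k := k' + 1) fun y => ?_
    rw [abs_of_nonneg (by positivity)]
  · -- the pointwise derivative
    refine Filter.Eventually.of_forall fun y => fun s _ => ?_
    have hu : HasDerivAt (fun t : ℝ => t * y + μ) y s := by
      simpa using ((hasDerivAt_id s).mul_const y).add_const μ
    exact ((hdiff (s * y + μ)).hasDerivAt.comp s hu)
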